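/- Let K and Q be compact Hausdorff spaces and π : K → Q a continuous surjection. For every finite open cover U of K there exists a finite open cover W of Q such that sup_{W∈W} N_{π^{-1}(W)}(U) = sup_{q∈Q} N_{π^{-1}(q)}(U), where N_B(U) denotes the minimal number of elements of U needed to cover B. -/
import Mathlib


/-- For a finite open cover `U` of a compact space `K` and a subset `B ⊆ K`, `coverNum U B` is
the minimal cardinality of a subfamily of `U` that covers `B`. -/
noncomputable def coverNum {K : Type*} [TopologicalSpace K]
    (U : Finset (Set K)) (B : Set K) : ℕ :=
  sInf {n : ℕ | ∃ V ⊆ U, V.card = n ∧ B ⊆ ⋃₀ (V : Set (Set K))}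

/-- Let `K` and `Q` be compact Hausdorff spaces and `π : K → Q` a continuous surjection. For
every finite open cover `U` of `K` there exists a finite open cover `W` of `Q` such that
`sup_{W ∈ W} N_{π⁻¹(W)}(U) = sup_{q ∈ Q} N_{π⁻¹(q)}(U)`. -/
theorem stmt11 {K Q : Type*} [TopologicalSpace K] [CompactSpace K] [T2Space K]
    [TopologicalSpace Q] [CompactSpace Q] [T2Space Q]
    (π : C(K, Q)) (hπ : Function.Surjective π)
    (U : Finset (Set K)) (hUopen : ∀ u ∈ U, IsOpen u)
    (hUcov : Set.univ ⊆ ⋃₀ (U : Set (Set K))) :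
    ∃ W : Finset (Set Q), (∀ w ∈ W, IsOpen w) ∧ Set.univ ⊆ ⋃₀ (W : Set (Set Q)) ∧
      W.sup (fun w => coverNum U ((π) ⁻¹' w)) =
        sSup (Set.range fun q : Q => coverNum U ((π) ⁻¹' {q})) := by
  classical
  by_cases hQ : Nonempty Q
  · -- main case
    set S : Set K → Set ℕ :=
      fun B => {n : ℕ | ∃ V ⊆ U, V.card = n ∧ B ⊆ ⋃₀ (V : Set (Set K))} with hS
    have hSU : ∀ B : Set K, U.card ∈ S B := by
      intro B
      exact ⟨U, le_refl U, rfl, fun x hx => hUcov (Set.mem_univ x)⟩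
    have hSne : ∀ B : Set K, (S B).Nonempty := fun B => ⟨U.card, hSU B⟩
    have hmono : ∀ B B' : Set K, B ⊆ B' → coverNum U B ≤ coverNum U B' := by
      intro B B' hBB
      have h1 : coverNum U B' ∈ S B' := Nat.sInf_mem (hSne B')
      obtain ⟨V, hVU, hVc, hVcov⟩ := h1
      exact Nat.sInf_le ⟨V, hVU, hVc, hBB.trans hVcov⟩
    -- choose optimal covers of fibers
    have hfib : ∀ q : Q, ∃ V ⊆ U, V.card = coverNum U (π ⁻¹' {q}) ∧
        π ⁻¹' {q} ⊆ ⋃₀ (V : Set (Set K)) := fun q => Nat.sInf_mem (hSne _)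
    choose V hVU hVcard hVcov using hfib
    have hclosed : IsClosedMap π := π.continuous.isClosedMap
    set Wq : Q → Set Q := fun q => (π '' (⋃₀ (V q : Set (Set K)))ᶜ)ᶜ with hWq
    have hWopen : ∀ q, IsOpen (Wq q) := by
      intro q
      have : IsClosed (π '' (⋃₀ (V q : Set (Set K)))ᶜ) := by
        apply hclosed
        apply IsOpen.isClosed_compl
        exact isOpen_sUnion (fun t ht => hUopen t (hVU q ht))
      exact this.isOpen_compl
    have hmemW : ∀ q, q ∈ Wq q := by
      intro q
      simp only [hWq, Set.mem_compl_iff, Set.mem_image, not_exists]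
      rintro k ⟨hk, hkq⟩
      exact hk (hVcov q (by simp [hkq]))
    have hpre : ∀ q, π ⁻¹' (Wq q) ⊆ ⋃₀ (V q : Set (Set K)) := by
      intro q k hk
      by_contra hkn
      exact hk ⟨k, hkn, rfl⟩
    -- finite subcover
    obtain ⟨t, ht⟩ := isCompact_univ.elim_finite_subcover Wq hWopen
      (fun q _ => Set.mem_iUnion.mpr ⟨q, hmemW q⟩)
    refine ⟨t.image Wq, ?_, ?_, ?_⟩
    · intro w hw
      obtain ⟨q, _, rfl⟩ := Finset.mem_image.mp hw
      exact hWopen q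
    · intro q hq
      obtain ⟨q', hq't, hq'⟩ := Set.mem_iUnion₂.mp (ht hq)
      exact ⟨Wq q', Finset.mem_coe.mpr (Finset.mem_image_of_mem _ hq't), hq'⟩
    · have hbdd : BddAbove (Set.range fun q : Q => coverNum U (π ⁻¹' {q})) := by
        refine ⟨U.card, ?_⟩
        rintro n ⟨q, rfl⟩
        exact Nat.sInf_le (hSU _)
      apply le_antisymm
      · apply Finset.sup_le
        intro w hw
        obtain ⟨q, _, rfl⟩ := Finset.mem_image.mp hw
        have h1 : coverNum U (π ⁻¹' (Wq q)) ≤ coverNum U (π ⁻¹' {q}) :=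
          Nat.sInf_le ⟨V q, hVU q, hVcard q, hpre q⟩
        exact h1.trans (le_csSup hbdd ⟨q, rfl⟩)
      · apply csSup_le (Set.range_nonempty _)
        rintro n ⟨q, rfl⟩
        obtain ⟨q', hq't, hq'⟩ := Set.mem_iUnion₂.mp (ht (Set.mem_univ q))
        have h1 : coverNum U (π ⁻¹' {q}) ≤ coverNum U (π ⁻¹' (Wq q')) := by
          apply hmono
          intro k hk
          simp only [Set.mem_preimage, Set.mem_singleton_iff] at hk
          simpa [Set.mem_preimage, hk] using hq'
        exact h1.trans (Finset.le_sup (f := fun w => coverNum U (π ⁻¹' w)) (Finset.mem_image_of_mem Wq hq't))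
  · -- Q empty
    refine ⟨∅, by simp, ?_, ?_⟩
    · intro q _; exact absurd ⟨q⟩ hQ
    · have : (Set.range fun q : Q => coverNum U (π ⁻¹' {q})) = ∅ := by
        rw [Set.range_eq_empty_iff]; exact ⟨fun q => hQ ⟨q⟩⟩
      simp [this]
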